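/- arXiv:2007.02189 — 2 statements merged into one kernel-verified Lean document; each statement's English description precedes it below -/
import Mathlib

section
/- The joint survival signature of two coherent systems is nondecreasing in each of its arguments: if l₁ ≤ m₁, l₂ ≤ m₂, l_{[1]2} ≤ m_{[1]2}, l_{1[2]} ≤ m_{1[2]} (componentwise, within admissible ranges and with the consistency constraint on shared-component counts preserved), then Φ(l₁,l₂,l_{[1]2},l_{1[2]}) ≤ Φ(m₁,m₂,m_{[1]2},m_{1[2]}). -/
open Finset

/-- The admissible configurations for two systems sharing `n₁₂` components:
the sets of functioning non-shared components of each system, together with a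
nested pair of sets of functioning shared components (the set functioning at
the later time contained in the set at the earlier time), with the prescribed
cardinalities. -/
def JointConfigs (n₁ n₂ n₁₂ : ℕ) (l₁ l₂ a b : ℕ) :
    Finset (Finset (Fin n₁) × Finset (Fin n₂) × Finset (Fin n₁₂) × Finset (Fin n₁₂)) :=
  Finset.univ.filter fun q =>
    q.1.card = l₁ ∧ q.2.1.card = l₂ ∧ q.2.2.1.card = a ∧ q.2.2.2.card = b ∧
      q.2.2.2 ⊆ q.2.2.1

/-- The joint survival signature of two systems with structure functions
`φ₁, φ₂` (each acting on the system's own components and on the shared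
components): the proportion, among all equally likely admissible
configurations, of those in which both systems function. -/
noncomputable def jointSurvSig (n₁ n₂ n₁₂ : ℕ)
    (φ₁ : Finset (Fin n₁) → Finset (Fin n₁₂) → Bool)
    (φ₂ : Finset (Fin n₂) → Finset (Fin n₁₂) → Bool)
    (l₁ l₂ a b : ℕ) : ℝ :=
  (((JointConfigs n₁ n₂ n₁₂ l₁ l₂ a b).filter fun q =>
      φ₁ q.1 q.2.2.1 = true ∧ φ₂ q.2.1 q.2.2.2 = true).card : ℝ) /
    ((JointConfigs n₁ n₂ n₁₂ l₁ l₂ a b).card : ℝ)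

lemma step_ratio {α β : Type*} {C : Finset α} {C' : Finset β} {R : α → β → Prop}
    {G : α → Prop} {G' : β → Prop}
    [DecidablePred G] [DecidablePred G']
    [∀ q, DecidablePred (R q)] [∀ q', DecidablePred (fun q => R q q')]
    {k k' : ℕ} (hk : 0 < k) (hk' : 0 < k')
    (hC : ∀ q ∈ C, (C'.filter fun q' => R q q').card = k)
    (hC' : ∀ q' ∈ C', (C.filter fun q => R q q').card = k')
    (hG : ∀ q ∈ C, ∀ q' ∈ C', R q q' → G q → G' q')
    (hne : C.Nonempty) :
    ((C.filter G).card : ℝ) / C.card ≤ ((C'.filter G').card : ℝ) / C'.card := by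
  have key : ∀ q ∈ C, ∑ q' ∈ C', (if R q q' then (1:ℕ) else 0) = k := by
    intro q hq; rw [← Finset.card_filter]; exact hC q hq
  have key' : ∀ q' ∈ C', ∑ q ∈ C, (if R q q' then (1:ℕ) else 0) = k' := by
    intro q' hq'; rw [← Finset.card_filter]; exact hC' q' hq'
  have e1 : ∑ q ∈ C, ∑ q' ∈ C', (if R q q' then (1:ℕ) else 0) = C.card * k := by
    rw [Finset.sum_congr rfl key, Finset.sum_const, smul_eq_mul]
  have e2 : ∑ q' ∈ C', ∑ q ∈ C, (if R q q' then (1:ℕ) else 0) = C'.card * k' := by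
    rw [Finset.sum_congr rfl key', Finset.sum_const, smul_eq_mul]
  have htot : C.card * k = C'.card * k' := by rw [← e1, ← e2, Finset.sum_comm]
  have g1 : (C.filter G).card * k
      = ∑ q ∈ C, (if G q then ∑ q' ∈ C', (if R q q' then (1:ℕ) else 0) else 0) := by
    rw [← Finset.sum_filter]
    rw [Finset.sum_congr rfl (fun q hq => key q (Finset.mem_filter.mp hq).1),
      Finset.sum_const, smul_eq_mul]
  have g2 : (C'.filter G').card * k'
      = ∑ q' ∈ C', (if G' q' then ∑ q ∈ C, (if R q q' then (1:ℕ) else 0) else 0) := by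
    rw [← Finset.sum_filter]
    rw [Finset.sum_congr rfl (fun q hq => key' q (Finset.mem_filter.mp hq).1),
      Finset.sum_const, smul_eq_mul]
  have hgood : (C.filter G).card * k ≤ (C'.filter G').card * k' := by
    rw [g1, g2]
    have lhs : ∑ q ∈ C, (if G q then ∑ q' ∈ C', (if R q q' then (1:ℕ) else 0) else 0)
        = ∑ q ∈ C, ∑ q' ∈ C', (if G q then (if R q q' then (1:ℕ) else 0) else 0) := by
      refine Finset.sum_congr rfl fun q _ => ?_
      split_ifs <;> simp
    have rhs : ∑ q' ∈ C', (if G' q' then ∑ q ∈ C, (if R q q' then (1:ℕ) else 0) else 0)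
        = ∑ q ∈ C, ∑ q' ∈ C', (if G' q' then (if R q q' then (1:ℕ) else 0) else 0) := by
      rw [Finset.sum_comm]
      refine Finset.sum_congr rfl fun q' _ => ?_
      split_ifs <;> simp
    rw [lhs, rhs]
    refine Finset.sum_le_sum fun q hq => Finset.sum_le_sum fun q' hq' => ?_
    by_cases hGq : G q
    · by_cases hR : R q q'
      · simp [hGq, hR, hG q hq q' hq' hR hGq]
      · simp [hR]
    · simp [hGq]
  have hCpos : 0 < C.card := Finset.card_pos.mpr hne
  have hC'pos : 0 < C'.card := by
    rcases Nat.eq_zero_or_pos C'.card with h | h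
    · exact absurd (htot.trans (by rw [h, zero_mul])) (Nat.mul_pos hCpos hk).ne'
    · exact h
  rw [div_le_div_iff₀ (by exact_mod_cast hCpos) (by exact_mod_cast hC'pos)]
  have : (C.filter G).card * C'.card ≤ (C'.filter G').card * C.card := by
    have h1 : (C.filter G).card * C'.card * k ≤ (C'.filter G').card * C.card * k := by
      calc (C.filter G).card * C'.card * k = (C.filter G).card * k * C'.card := by ring
        _ ≤ (C'.filter G').card * k' * C'.card := Nat.mul_le_mul_right _ hgood
        _ = (C'.filter G').card * (C'.card * k') := by ring
        _ = (C'.filter G').card * (C.card * k) := by rw [← htot]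
        _ = (C'.filter G').card * C.card * k := by ring
    exact Nat.le_of_mul_le_mul_right h1 hk
  exact_mod_cast this

lemma count_up {α : Type*} [DecidableEq α] [Fintype α] (U s : Finset α) (hs : s ⊆ U) :
    (univ.filter fun t : Finset α => s ⊆ t ∧ t ⊆ U ∧ t.card = s.card + 1).card
      = (U \ s).card := by
  symm
  apply Finset.card_nbij (fun x => insert x s)
  · intro x hx
    simp only [Finset.mem_coe, Finset.mem_sdiff] at hx
    simp only [Finset.mem_coe, Finset.mem_filter, Finset.mem_univ, true_and]
    exact ⟨Finset.subset_insert _ _, Finset.insert_subset hx.1 hs,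
      Finset.card_insert_of_notMem hx.2⟩
  · intro x hx y hy hxy
    simp only [Finset.coe_sdiff, Set.mem_diff, Finset.mem_coe] at hx hy
    replace hxy : insert x s = insert y s := hxy
    have hmem : x ∈ insert y s := hxy ▸ Finset.mem_insert_self x s
    rcases Finset.mem_insert.mp hmem with h | h
    · exact h
    · exact absurd h hx.2
  · intro t ht
    simp only [Finset.coe_filter, Set.mem_setOf_eq, Finset.mem_univ, true_and] at ht
    obtain ⟨hst, htU, hcard⟩ := ht
    have h1 : (t \ s).card = 1 := by rw [Finset.card_sdiff_of_subset hst, hcard]; omega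
    obtain ⟨x, hx⟩ := Finset.card_eq_one.mp h1
    have hxt : x ∈ t \ s := hx ▸ Finset.mem_singleton_self x
    rw [Finset.mem_sdiff] at hxt
    refine ⟨x, ?_, ?_⟩
    · simp only [Finset.coe_sdiff, Set.mem_diff, Finset.mem_coe]
      exact ⟨htU hxt.1, hxt.2⟩
    · show insert x s = t
      refine Finset.eq_of_subset_of_card_le (Finset.insert_subset hxt.1 hst) ?_
      rw [hcard, Finset.card_insert_of_notMem hxt.2]

lemma count_down {α : Type*} [DecidableEq α] [Fintype α] (L t : Finset α) (hL : L ⊆ t) :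
    (univ.filter fun s : Finset α => s ⊆ t ∧ L ⊆ s ∧ s.card + 1 = t.card).card
      = (t \ L).card := by
  symm
  apply Finset.card_nbij (fun x => t.erase x)
  · intro x hx
    simp only [Finset.mem_coe, Finset.mem_sdiff] at hx
    simp only [Finset.mem_coe, Finset.mem_filter, Finset.mem_univ, true_and]
    refine ⟨Finset.erase_subset _ _, fun y hy => Finset.mem_erase.mpr
      ⟨fun h => hx.2 (by rwa [h] at hy), hL hy⟩, ?_⟩
    rw [Finset.card_erase_of_mem hx.1]
    have : 0 < t.card := Finset.card_pos.mpr ⟨x, hx.1⟩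
    omega
  · intro x hx y hy hxy
    simp only [Finset.coe_sdiff, Set.mem_diff, Finset.mem_coe] at hx hy
    by_contra hne
    replace hxy : t.erase x = t.erase y := hxy
    have hmem : x ∈ t.erase y := Finset.mem_erase.mpr ⟨hne, hx.1⟩
    rw [← hxy] at hmem
    exact (Finset.mem_erase.mp hmem).1 rfl
  · intro s hs
    simp only [Finset.coe_filter, Set.mem_setOf_eq, Finset.mem_univ, true_and] at hs
    obtain ⟨hst, hLs, hcard⟩ := hs
    have h1 : (t \ s).card = 1 := by rw [Finset.card_sdiff_of_subset hst]; omega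
    obtain ⟨x, hx⟩ := Finset.card_eq_one.mp h1
    have hxt : x ∈ t \ s := hx ▸ Finset.mem_singleton_self x
    rw [Finset.mem_sdiff] at hxt
    refine ⟨x, ?_, ?_⟩
    · simp only [Finset.coe_sdiff, Set.mem_diff, Finset.mem_coe]
      exact ⟨hxt.1, fun h => hxt.2 (hLs h)⟩
    · show t.erase x = s
      refine (Finset.eq_of_subset_of_card_le
        (fun y (hy : y ∈ s) => Finset.mem_erase.mpr
          ⟨fun h => hxt.2 (by rwa [h] at hy), hst hy⟩) ?_).symm
      rw [Finset.card_erase_of_mem hxt.1]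
      omega

lemma configs_nonempty {n₁ n₂ n₁₂ l₁ l₂ a b : ℕ} (h1 : l₁ ≤ n₁) (h2 : l₂ ≤ n₂)
    (h3 : a ≤ n₁₂) (h4 : b ≤ a) : (JointConfigs n₁ n₂ n₁₂ l₁ l₂ a b).Nonempty := by
  obtain ⟨s1, -, hs1⟩ := Finset.exists_subset_card_eq
    (show l₁ ≤ (univ : Finset (Fin n₁)).card by simpa using h1)
  obtain ⟨s2, -, hs2⟩ := Finset.exists_subset_card_eq
    (show l₂ ≤ (univ : Finset (Fin n₂)).card by simpa using h2)
  obtain ⟨A, -, hA⟩ := Finset.exists_subset_card_eq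
    (show a ≤ (univ : Finset (Fin n₁₂)).card by simpa using h3)
  obtain ⟨B, hBA, hB⟩ := Finset.exists_subset_card_eq (show b ≤ A.card by rw [hA]; exact h4)
  exact ⟨(s1, s2, A, B), by simp [JointConfigs, hs1, hs2, hA, hB, hBA]⟩

lemma step_l1 (n₁ n₂ n₁₂ : ℕ)
    (φ₁ : Finset (Fin n₁) → Finset (Fin n₁₂) → Bool)
    (φ₂ : Finset (Fin n₂) → Finset (Fin n₁₂) → Bool)
    (hφ₁ : ∀ A A' B B', A ⊆ A' → B ⊆ B' → φ₁ A B = true → φ₁ A' B' = true)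
    (l₁ l₂ a b : ℕ) (hl : l₁ < n₁) (hl₂ : l₂ ≤ n₂) (ha : a ≤ n₁₂) (hb : b ≤ a) :
    jointSurvSig n₁ n₂ n₁₂ φ₁ φ₂ l₁ l₂ a b
      ≤ jointSurvSig n₁ n₂ n₁₂ φ₁ φ₂ (l₁+1) l₂ a b := by
  unfold jointSurvSig
  refine step_ratio (R := fun q q' => q.1 ⊆ q'.1 ∧ q.2 = q'.2)
    (k := n₁ - l₁) (k' := l₁ + 1) (by omega) (by omega) ?_ ?_ ?_
    (configs_nonempty hl.le hl₂ ha hb)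
  · intro q hq
    simp only [JointConfigs, Finset.mem_coe, Finset.mem_filter, Finset.mem_univ, true_and] at hq
    obtain ⟨h1, h2, h3, h4, h5⟩ := hq
    have ecard : (Finset.univ.filter fun t : Finset (Fin n₁) =>
        q.1 ⊆ t ∧ t ⊆ Finset.univ ∧ t.card = q.1.card + 1).card = n₁ - l₁ := by
      rw [count_up _ _ (Finset.subset_univ _), Finset.card_sdiff_of_subset (Finset.subset_univ _),
        Finset.card_univ, Fintype.card_fin, h1]
    rw [← ecard]
    apply Finset.card_nbij' (fun q' => q'.1) (fun t => (t, q.2))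
    · intro q' hq'
      simp only [JointConfigs, Finset.mem_coe, Finset.mem_filter, Finset.mem_univ, true_and] at hq'
      simp only [Finset.mem_coe, Finset.mem_filter, Finset.mem_univ, true_and]
      exact ⟨hq'.2.1, Finset.subset_univ _, by rw [hq'.1.1, h1]⟩
    · intro t ht
      simp only [Finset.mem_coe, Finset.mem_filter, Finset.mem_univ, true_and] at ht
      obtain ⟨hta, -, htc⟩ := ht
      refine Finset.mem_filter.mpr ⟨?_, hta, rfl⟩
      unfold JointConfigs
      refine Finset.mem_filter.mpr ⟨Finset.mem_univ _, ?_, h2, h3, h4, h5⟩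
      rw [htc, h1]
    · intro q' hq'
      simp only [Finset.mem_coe, Finset.mem_filter] at hq'
      rw [hq'.2.2]
    · intro t ht
      rfl
  · intro q' hq'
    simp only [JointConfigs, Finset.mem_coe, Finset.mem_filter, Finset.mem_univ, true_and] at hq'
    obtain ⟨h1, h2, h3, h4, h5⟩ := hq'
    have ecard : (Finset.univ.filter fun s : Finset (Fin n₁) =>
        s ⊆ q'.1 ∧ (∅ : Finset (Fin n₁)) ⊆ s ∧ s.card + 1 = q'.1.card).card = l₁ + 1 := by
      rw [count_down _ _ (Finset.empty_subset _), Finset.sdiff_empty, h1]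
    rw [← ecard]
    apply Finset.card_nbij' (fun q => q.1) (fun t => (t, q'.2))
    · intro q hq
      simp only [JointConfigs, Finset.mem_coe, Finset.mem_filter, Finset.mem_univ, true_and] at hq
      simp only [Finset.mem_coe, Finset.mem_filter, Finset.mem_univ, true_and]
      exact ⟨hq.2.1, Finset.empty_subset _, by rw [hq.1.1, h1]⟩
    · intro t ht
      simp only [Finset.mem_coe, Finset.mem_filter, Finset.mem_univ, true_and] at ht
      obtain ⟨hta, -, htc⟩ := ht
      refine Finset.mem_filter.mpr ⟨?_, hta, rfl⟩
      unfold JointConfigs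
      refine Finset.mem_filter.mpr ⟨Finset.mem_univ _, ?_, h2, h3, h4, h5⟩
      show t.card = l₁
      omega
    · intro q hq
      simp only [Finset.mem_coe, Finset.mem_filter] at hq
      rw [← hq.2.2]
    · intro t ht
      rfl
  · rintro q hq q' hq' ⟨hsub, heq⟩ hGq
    refine ⟨hφ₁ _ _ _ _ hsub ?_ hGq.1, ?_⟩
    · rw [heq]
    · rw [← heq]; exact hGq.2

lemma step_l2 (n₁ n₂ n₁₂ : ℕ)
    (φ₁ : Finset (Fin n₁) → Finset (Fin n₁₂) → Bool)
    (φ₂ : Finset (Fin n₂) → Finset (Fin n₁₂) → Bool)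
    (hφ₂ : ∀ A A' B B', A ⊆ A' → B ⊆ B' → φ₂ A B = true → φ₂ A' B' = true)
    (l₁ l₂ a b : ℕ) (hl₁ : l₁ ≤ n₁) (hl : l₂ < n₂) (ha : a ≤ n₁₂) (hb : b ≤ a) :
    jointSurvSig n₁ n₂ n₁₂ φ₁ φ₂ l₁ l₂ a b
      ≤ jointSurvSig n₁ n₂ n₁₂ φ₁ φ₂ l₁ (l₂+1) a b := by
  unfold jointSurvSig
  refine step_ratio (R := fun q q' => q.1 = q'.1 ∧ q.2.1 ⊆ q'.2.1 ∧ q.2.2 = q'.2.2)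
    (k := n₂ - l₂) (k' := l₂ + 1) (by omega) (by omega) ?_ ?_ ?_
    (configs_nonempty hl₁ hl.le ha hb)
  · intro q hq
    simp only [JointConfigs, Finset.mem_coe, Finset.mem_filter, Finset.mem_univ, true_and] at hq
    obtain ⟨h1, h2, h3, h4, h5⟩ := hq
    have ecard : (Finset.univ.filter fun t : Finset (Fin n₂) =>
        q.2.1 ⊆ t ∧ t ⊆ Finset.univ ∧ t.card = q.2.1.card + 1).card = n₂ - l₂ := by
      rw [count_up _ _ (Finset.subset_univ _), Finset.card_sdiff_of_subset (Finset.subset_univ _),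
        Finset.card_univ, Fintype.card_fin, h2]
    rw [← ecard]
    apply Finset.card_nbij' (fun q' => q'.2.1) (fun t => (q.1, t, q.2.2))
    · intro q' hq'
      simp only [JointConfigs, Finset.mem_coe, Finset.mem_filter, Finset.mem_univ, true_and] at hq'
      simp only [Finset.mem_coe, Finset.mem_filter, Finset.mem_univ, true_and]
      exact ⟨hq'.2.2.1, Finset.subset_univ _, by rw [hq'.1.2.1, h2]⟩
    · intro t ht
      simp only [Finset.mem_coe, Finset.mem_filter, Finset.mem_univ, true_and] at ht
      obtain ⟨hta, -, htc⟩ := ht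
      refine Finset.mem_filter.mpr ⟨?_, rfl, hta, rfl⟩
      unfold JointConfigs
      refine Finset.mem_filter.mpr ⟨Finset.mem_univ _, h1, ?_, h3, h4, h5⟩
      show t.card = l₂ + 1
      omega
    · rintro ⟨A, S, T, U⟩ hq'
      simp only [Finset.mem_coe, Finset.mem_filter] at hq'
      obtain ⟨-, e1, -, e2⟩ := hq'
      rw [e1, e2]
    · intro t ht
      rfl
  · intro q' hq'
    simp only [JointConfigs, Finset.mem_coe, Finset.mem_filter, Finset.mem_univ, true_and] at hq'
    obtain ⟨h1, h2, h3, h4, h5⟩ := hq'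
    have ecard : (Finset.univ.filter fun s : Finset (Fin n₂) =>
        s ⊆ q'.2.1 ∧ (∅ : Finset (Fin n₂)) ⊆ s ∧ s.card + 1 = q'.2.1.card).card = l₂ + 1 := by
      rw [count_down _ _ (Finset.empty_subset _), Finset.sdiff_empty, h2]
    rw [← ecard]
    apply Finset.card_nbij' (fun q => q.2.1) (fun t => (q'.1, t, q'.2.2))
    · intro q hq
      simp only [JointConfigs, Finset.mem_coe, Finset.mem_filter, Finset.mem_univ, true_and] at hq
      simp only [Finset.mem_coe, Finset.mem_filter, Finset.mem_univ, true_and]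
      exact ⟨hq.2.2.1, Finset.empty_subset _, by rw [hq.1.2.1, h2]⟩
    · intro t ht
      simp only [Finset.mem_coe, Finset.mem_filter, Finset.mem_univ, true_and] at ht
      obtain ⟨hta, -, htc⟩ := ht
      refine Finset.mem_filter.mpr ⟨?_, rfl, hta, rfl⟩
      unfold JointConfigs
      refine Finset.mem_filter.mpr ⟨Finset.mem_univ _, h1, ?_, h3, h4, h5⟩
      show t.card = l₂
      omega
    · rintro ⟨A, S, T, U⟩ hq
      simp only [Finset.mem_coe, Finset.mem_filter] at hq
      obtain ⟨-, e1, -, e2⟩ := hq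
      rw [← e1, ← e2]
    · intro t ht
      rfl
  · rintro q hq q' hq' ⟨e1, hsub, e2⟩ hGq
    constructor
    · rw [← e1]
      have : q.2.2.1 = q'.2.2.1 := by rw [e2]
      rw [← this]
      exact hGq.1
    · refine hφ₂ _ _ _ _ hsub ?_ hGq.2
      rw [e2]

lemma step_a (n₁ n₂ n₁₂ : ℕ)
    (φ₁ : Finset (Fin n₁) → Finset (Fin n₁₂) → Bool)
    (φ₂ : Finset (Fin n₂) → Finset (Fin n₁₂) → Bool)
    (hφ₁ : ∀ A A' B B', A ⊆ A' → B ⊆ B' → φ₁ A B = true → φ₁ A' B' = true)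
    (l₁ l₂ a b : ℕ) (hl₁ : l₁ ≤ n₁) (hl₂ : l₂ ≤ n₂) (ha : a < n₁₂) (hb : b ≤ a) :
    jointSurvSig n₁ n₂ n₁₂ φ₁ φ₂ l₁ l₂ a b
      ≤ jointSurvSig n₁ n₂ n₁₂ φ₁ φ₂ l₁ l₂ (a+1) b := by
  unfold jointSurvSig
  refine step_ratio
    (R := fun q q' => q.1 = q'.1 ∧ q.2.1 = q'.2.1 ∧ q.2.2.1 ⊆ q'.2.2.1 ∧ q.2.2.2 = q'.2.2.2)
    (k := n₁₂ - a) (k' := a + 1 - b) (by omega) (by omega) ?_ ?_ ?_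
    (configs_nonempty hl₁ hl₂ ha.le hb)
  · intro q hq
    simp only [JointConfigs, Finset.mem_coe, Finset.mem_filter, Finset.mem_univ, true_and] at hq
    obtain ⟨h1, h2, h3, h4, h5⟩ := hq
    have ecard : (Finset.univ.filter fun t : Finset (Fin n₁₂) =>
        q.2.2.1 ⊆ t ∧ t ⊆ Finset.univ ∧ t.card = q.2.2.1.card + 1).card = n₁₂ - a := by
      rw [count_up _ _ (Finset.subset_univ _), Finset.card_sdiff_of_subset (Finset.subset_univ _),
        Finset.card_univ, Fintype.card_fin, h3]
    rw [← ecard]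
    apply Finset.card_nbij' (fun q' => q'.2.2.1) (fun t => (q.1, q.2.1, t, q.2.2.2))
    · intro q' hq'
      simp only [JointConfigs, Finset.mem_coe, Finset.mem_filter, Finset.mem_univ, true_and] at hq'
      simp only [Finset.mem_coe, Finset.mem_filter, Finset.mem_univ, true_and]
      exact ⟨hq'.2.2.2.1, Finset.subset_univ _, by rw [hq'.1.2.2.1, h3]⟩
    · intro t ht
      simp only [Finset.mem_coe, Finset.mem_filter, Finset.mem_univ, true_and] at ht
      obtain ⟨hta, -, htc⟩ := ht
      refine Finset.mem_filter.mpr ⟨?_, rfl, rfl, hta, rfl⟩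
      unfold JointConfigs
      refine Finset.mem_filter.mpr ⟨Finset.mem_univ _, h1, h2, ?_, h4, h5.trans hta⟩
      show t.card = a + 1
      omega
    · rintro ⟨A, S, T, U⟩ hq'
      simp only [Finset.mem_coe, Finset.mem_filter] at hq'
      obtain ⟨-, e1, e2, -, e3⟩ := hq'
      rw [e1, e2, e3]
    · intro t ht
      rfl
  · intro q' hq'
    simp only [JointConfigs, Finset.mem_coe, Finset.mem_filter, Finset.mem_univ, true_and] at hq'
    obtain ⟨h1, h2, h3, h4, h5⟩ := hq'
    have ecard : (Finset.univ.filter fun s : Finset (Fin n₁₂) =>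
        s ⊆ q'.2.2.1 ∧ q'.2.2.2 ⊆ s ∧ s.card + 1 = q'.2.2.1.card).card = a + 1 - b := by
      rw [count_down _ _ h5, Finset.card_sdiff_of_subset h5, h3, h4]
    rw [← ecard]
    apply Finset.card_nbij' (fun q => q.2.2.1) (fun t => (q'.1, q'.2.1, t, q'.2.2.2))
    · intro q hq
      simp only [JointConfigs, Finset.mem_coe, Finset.mem_filter, Finset.mem_univ, true_and] at hq
      simp only [Finset.mem_coe, Finset.mem_filter, Finset.mem_univ, true_and]
      refine ⟨hq.2.2.2.1, ?_, by rw [hq.1.2.2.1, h3]⟩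
      rw [← hq.2.2.2.2]
      exact hq.1.2.2.2.2
    · intro t ht
      simp only [Finset.mem_coe, Finset.mem_filter, Finset.mem_univ, true_and] at ht
      obtain ⟨hta, htb, htc⟩ := ht
      refine Finset.mem_filter.mpr ⟨?_, rfl, rfl, hta, rfl⟩
      unfold JointConfigs
      refine Finset.mem_filter.mpr ⟨Finset.mem_univ _, h1, h2, ?_, h4, htb⟩
      show t.card = a
      omega
    · rintro ⟨A, S, T, U⟩ hq
      simp only [Finset.mem_coe, Finset.mem_filter] at hq
      obtain ⟨-, e1, e2, -, e3⟩ := hq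
      rw [← e1, ← e2, ← e3]
    · intro t ht
      rfl
  · rintro q hq q' hq' ⟨e1, e2, hsub, e3⟩ hGq
    constructor
    · rw [← e1]
      exact hφ₁ _ _ _ _ (Finset.Subset.refl _) hsub hGq.1
    · rw [← e2, ← e3]
      exact hGq.2

lemma step_b (n₁ n₂ n₁₂ : ℕ)
    (φ₁ : Finset (Fin n₁) → Finset (Fin n₁₂) → Bool)
    (φ₂ : Finset (Fin n₂) → Finset (Fin n₁₂) → Bool)
    (hφ₂ : ∀ A A' B B', A ⊆ A' → B ⊆ B' → φ₂ A B = true → φ₂ A' B' = true)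
    (l₁ l₂ a b : ℕ) (hl₁ : l₁ ≤ n₁) (hl₂ : l₂ ≤ n₂) (ha : a ≤ n₁₂) (hb : b < a) :
    jointSurvSig n₁ n₂ n₁₂ φ₁ φ₂ l₁ l₂ a b
      ≤ jointSurvSig n₁ n₂ n₁₂ φ₁ φ₂ l₁ l₂ a (b+1) := by
  unfold jointSurvSig
  refine step_ratio
    (R := fun q q' => q.1 = q'.1 ∧ q.2.1 = q'.2.1 ∧ q.2.2.1 = q'.2.2.1 ∧ q.2.2.2 ⊆ q'.2.2.2)
    (k := a - b) (k' := b + 1) (by omega) (by omega) ?_ ?_ ?_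
    (configs_nonempty hl₁ hl₂ ha hb.le)
  · intro q hq
    simp only [JointConfigs, Finset.mem_coe, Finset.mem_filter, Finset.mem_univ, true_and] at hq
    obtain ⟨h1, h2, h3, h4, h5⟩ := hq
    have ecard : (Finset.univ.filter fun t : Finset (Fin n₁₂) =>
        q.2.2.2 ⊆ t ∧ t ⊆ q.2.2.1 ∧ t.card = q.2.2.2.card + 1).card = a - b := by
      rw [count_up _ _ h5, Finset.card_sdiff_of_subset h5, h3, h4]
    rw [← ecard]
    apply Finset.card_nbij' (fun q' => q'.2.2.2) (fun t => (q.1, q.2.1, q.2.2.1, t))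
    · intro q' hq'
      simp only [JointConfigs, Finset.mem_coe, Finset.mem_filter, Finset.mem_univ, true_and] at hq'
      simp only [Finset.mem_coe, Finset.mem_filter, Finset.mem_univ, true_and]
      refine ⟨hq'.2.2.2.2, ?_, by rw [hq'.1.2.2.2.1, h4]⟩
      rw [hq'.2.2.2.1]
      exact hq'.1.2.2.2.2
    · intro t ht
      simp only [Finset.mem_coe, Finset.mem_filter, Finset.mem_univ, true_and] at ht
      obtain ⟨hta, htb, htc⟩ := ht
      refine Finset.mem_filter.mpr ⟨?_, rfl, rfl, rfl, hta⟩
      unfold JointConfigs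
      refine Finset.mem_filter.mpr ⟨Finset.mem_univ _, h1, h2, h3, ?_, htb⟩
      show t.card = b + 1
      omega
    · rintro ⟨A, S, T, U⟩ hq'
      simp only [Finset.mem_coe, Finset.mem_filter] at hq'
      obtain ⟨-, e1, e2, e3, -⟩ := hq'
      rw [e1, e2, e3]
    · intro t ht
      rfl
  · intro q' hq'
    simp only [JointConfigs, Finset.mem_coe, Finset.mem_filter, Finset.mem_univ, true_and] at hq'
    obtain ⟨h1, h2, h3, h4, h5⟩ := hq'
    have ecard : (Finset.univ.filter fun s : Finset (Fin n₁₂) =>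
        s ⊆ q'.2.2.2 ∧ (∅ : Finset (Fin n₁₂)) ⊆ s ∧ s.card + 1 = q'.2.2.2.card).card
          = b + 1 := by
      rw [count_down _ _ (Finset.empty_subset _), Finset.sdiff_empty, h4]
    rw [← ecard]
    apply Finset.card_nbij' (fun q => q.2.2.2) (fun t => (q'.1, q'.2.1, q'.2.2.1, t))
    · intro q hq
      simp only [JointConfigs, Finset.mem_coe, Finset.mem_filter, Finset.mem_univ, true_and] at hq
      simp only [Finset.mem_coe, Finset.mem_filter, Finset.mem_univ, true_and]
      exact ⟨hq.2.2.2.2, Finset.empty_subset _, by rw [hq.1.2.2.2.1, h4]⟩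
    · intro t ht
      simp only [Finset.mem_coe, Finset.mem_filter, Finset.mem_univ, true_and] at ht
      obtain ⟨hta, -, htc⟩ := ht
      refine Finset.mem_filter.mpr ⟨?_, rfl, rfl, rfl, hta⟩
      unfold JointConfigs
      refine Finset.mem_filter.mpr ⟨Finset.mem_univ _, h1, h2, h3, ?_, hta.trans h5⟩
      show t.card = b
      omega
    · rintro ⟨A, S, T, U⟩ hq
      simp only [Finset.mem_coe, Finset.mem_filter] at hq
      obtain ⟨-, e1, e2, e3, -⟩ := hq
      rw [← e1, ← e2, ← e3]
    · intro t ht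
      rfl
  · rintro q hq q' hq' ⟨e1, e2, e3, hsub⟩ hGq
    constructor
    · rw [← e1, ← e3]
      exact hGq.1
    · rw [← e2]
      exact hφ₂ _ _ _ _ (Finset.Subset.refl _) hsub hGq.2


/-- the joint survival signature of two coherent systems is
nondecreasing in each of its arguments. -/
theorem jointSurvSig_monotone (n₁ n₂ n₁₂ : ℕ)
    (φ₁ : Finset (Fin n₁) → Finset (Fin n₁₂) → Bool)
    (φ₂ : Finset (Fin n₂) → Finset (Fin n₁₂) → Bool)
    (hφ₁ : ∀ A A' B B', A ⊆ A' → B ⊆ B' → φ₁ A B = true → φ₁ A' B' = true)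
    (hφ₂ : ∀ A A' B B', A ⊆ A' → B ⊆ B' → φ₂ A B = true → φ₂ A' B' = true)
    (l₁ l₂ a b m₁ m₂ a' b' : ℕ)
    (h₁ : l₁ ≤ m₁) (h₂ : l₂ ≤ m₂) (h₃ : a ≤ a') (h₄ : b ≤ b')
    (hm₁ : m₁ ≤ n₁) (hm₂ : m₂ ≤ n₂) (ha' : a' ≤ n₁₂)
    (hba : b ≤ a) (hba' : b' ≤ a') :
    jointSurvSig n₁ n₂ n₁₂ φ₁ φ₂ l₁ l₂ a b ≤
      jointSurvSig n₁ n₂ n₁₂ φ₁ φ₂ m₁ m₂ a' b' := by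
  have s1 : ∀ m, l₁ ≤ m → m ≤ n₁ → jointSurvSig n₁ n₂ n₁₂ φ₁ φ₂ l₁ l₂ a b
      ≤ jointSurvSig n₁ n₂ n₁₂ φ₁ φ₂ m l₂ a b := by
    intro m hm
    induction m, hm using Nat.le_induction with
    | base => exact fun _ => le_rfl
    | succ m hlm ih =>
        intro h
        exact (ih (by omega)).trans
          (step_l1 n₁ n₂ n₁₂ φ₁ φ₂ hφ₁ m l₂ a b (by omega)
            (h₂.trans hm₂) (h₃.trans ha') hba)
  have s2 : ∀ m, l₂ ≤ m → m ≤ n₂ → jointSurvSig n₁ n₂ n₁₂ φ₁ φ₂ m₁ l₂ a b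
      ≤ jointSurvSig n₁ n₂ n₁₂ φ₁ φ₂ m₁ m a b := by
    intro m hm
    induction m, hm using Nat.le_induction with
    | base => exact fun _ => le_rfl
    | succ m hlm ih =>
        intro h
        exact (ih (by omega)).trans
          (step_l2 n₁ n₂ n₁₂ φ₁ φ₂ hφ₂ m₁ m a b hm₁ (by omega)
            (h₃.trans ha') hba)
  have s3 : ∀ m, a ≤ m → m ≤ n₁₂ → jointSurvSig n₁ n₂ n₁₂ φ₁ φ₂ m₁ m₂ a b
      ≤ jointSurvSig n₁ n₂ n₁₂ φ₁ φ₂ m₁ m₂ m b := by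
    intro m hm
    induction m, hm using Nat.le_induction with
    | base => exact fun _ => le_rfl
    | succ m hlm ih =>
        intro h
        exact (ih (by omega)).trans
          (step_a n₁ n₂ n₁₂ φ₁ φ₂ hφ₁ m₁ m₂ m b hm₁ hm₂ (by omega)
            (hba.trans hlm))
  have s4 : ∀ m, b ≤ m → m ≤ a' → jointSurvSig n₁ n₂ n₁₂ φ₁ φ₂ m₁ m₂ a' b
      ≤ jointSurvSig n₁ n₂ n₁₂ φ₁ φ₂ m₁ m₂ a' m := by
    intro m hm
    induction m, hm using Nat.le_induction with
    | base => exact fun _ => le_rfl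
    | succ m hlm ih =>
        intro h
        exact (ih (by omega)).trans
          (step_b n₁ n₂ n₁₂ φ₁ φ₂ hφ₂ m₁ m₂ a' m hm₁ hm₂ ha' (by omega))
  calc jointSurvSig n₁ n₂ n₁₂ φ₁ φ₂ l₁ l₂ a b
      ≤ jointSurvSig n₁ n₂ n₁₂ φ₁ φ₂ m₁ l₂ a b := s1 m₁ h₁ hm₁
    _ ≤ jointSurvSig n₁ n₂ n₁₂ φ₁ φ₂ m₁ m₂ a b := s2 m₂ h₂ hm₂
    _ ≤ jointSurvSig n₁ n₂ n₁₂ φ₁ φ₂ m₁ m₂ a' b := s3 a' h₃ ha'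
    _ ≤ jointSurvSig n₁ n₂ n₁₂ φ₁ φ₂ m₁ m₂ a' b' := s4 b' h₄ hba'
end

section
/- For a coherent system with one type of component (K = 1), the survival signature satisfies Φ(l) = Σ_{j = n−l+1}^{n} s_j for l = 1,…,n, where s_j is Samaniego's signature, i.e., s_j is the probability that the system fails at the j-th ordered component failure; equivalently, Φ(l) = |{x ∈ {0,1}^n : Σxᵢ = l, φ(x) = 1}| / C(n, l) equals the proportion of permutations σ of the components such that the system, with exactly the last l components (in the failure order σ) still functioning, functions. -/
open Finset

/-- The component state vector after the first `j` failures, when the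
components fail in the order `σ 0, σ 1, …, σ (n-1)`: component `i` still
functions iff its position `σ⁻¹ i` in the failure order is at least `j`;
exactly the last `n - j` components in the failure order (equivalently, the
last `l` components when `j = n - l`) are functioning. -/
def stateAfter {n : ℕ} (σ : Equiv.Perm (Fin n)) (j : ℕ) : Fin n → Bool :=
  fun i => decide (j ≤ ((σ.symm i : Fin n) : ℕ))

/-- The survival signature `Φ(l)` of a system with one type of component:
the proportion of weight-`l` state vectors for which the system functions. -/
noncomputable def survSig (n : ℕ) (φ : (Fin n → Bool) → Bool) (l : ℕ) : ℝ :=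
  ((Finset.univ.filter fun x : Fin n → Bool =>
      (Finset.univ.filter fun i => x i = true).card = l ∧ φ x = true).card : ℝ) /
    (n.choose l : ℝ)

/-- Samaniego's signature `s j`: the proportion of failure orders (permutations)
for which the system state flips from functioning to failed exactly at the
`j`-th component failure. -/
noncomputable def samaniego (n : ℕ) (φ : (Fin n → Bool) → Bool) (j : ℕ) : ℝ :=
  ((Finset.univ.filter fun σ : Equiv.Perm (Fin n) =>
      φ (stateAfter σ (j - 1)) = true ∧ φ (stateAfter σ j) = false).card : ℝ) /
    (n.factorial : ℝ)

lemma auxA (n m : ℕ) (hm : m ≤ n) :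
    (Finset.univ.filter fun k : Fin n => m ≤ (k : ℕ)).card = n - m := by
  rw [← Nat.card_Ico m n]
  refine Finset.card_bij (fun k _ => (k : ℕ)) ?_ ?_ ?_
  · intro k hk; simp at hk ⊢; omega
  · intro a ha b hb h; exact Fin.ext h
  · intro a ha; simp at ha; exact ⟨⟨a, ha.2⟩, by simp [ha.1], rfl⟩

lemma auxB (n m : ℕ) (σ : Equiv.Perm (Fin n)) (hm : m ≤ n) :
    (Finset.univ.filter fun i => stateAfter σ m i = true).card = n - m := by
  rw [← auxA n m hm]
  refine Finset.card_bij (fun i _ => σ.symm i) ?_ ?_ ?_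
  · intro i hi; simp [stateAfter] at hi ⊢; exact hi
  · intro a _ b _ h; exact σ.symm.injective h
  · intro k hk; simp [stateAfter] at hk ⊢; exact ⟨σ k, by simp [hk]⟩

lemma auxCard1 (n m : ℕ) (hm : m ≤ n) :
    Fintype.card {k : Fin n // m ≤ (k : ℕ)} = n - m := by
  rw [Fintype.card_subtype]; exact auxA n m hm

lemma auxCard2 (n m : ℕ) (hm : m ≤ n) :
    Fintype.card {k : Fin n // ¬ m ≤ (k : ℕ)} = m := by
  have h := Fintype.card_subtype_compl (fun k : Fin n => m ≤ (k : ℕ))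
  rw [h, auxCard1 n m hm, Fintype.card_fin]; omega

lemma auxCard3 (n : ℕ) (x : Fin n → Bool) :
    Fintype.card {i : Fin n // x i = true} =
      (Finset.univ.filter fun i => x i = true).card := by
  rw [Fintype.card_subtype]

lemma auxCard4 (n : ℕ) (x : Fin n → Bool) :
    Fintype.card {i : Fin n // ¬ x i = true} =
      n - (Finset.univ.filter fun i => x i = true).card := by
  have h := Fintype.card_subtype_compl (fun i : Fin n => x i = true)
  rw [h, auxCard3, Fintype.card_fin]

/-- The fiber equivalence. -/
def auxE (n j : ℕ) (x : Fin n → Bool) :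
    {σ : Equiv.Perm (Fin n) // ∀ k : Fin n, j ≤ (k : ℕ) ↔ x (σ k) = true} ≃
      ({k : Fin n // j ≤ (k : ℕ)} ≃ {i : Fin n // x i = true}) ×
      ({k : Fin n // ¬ j ≤ (k : ℕ)} ≃ {i : Fin n // ¬ x i = true}) where
  toFun σh := ⟨Equiv.subtypeEquiv σh.1 σh.2,
    Equiv.subtypeEquiv σh.1 (fun k => not_iff_not.mpr (σh.2 k))⟩
  invFun ef := ⟨Equiv.subtypeCongr ef.1 ef.2, by
    intro k
    by_cases h : j ≤ (k : ℕ)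
    · have hk : Equiv.subtypeCongr ef.1 ef.2 k = (ef.1 ⟨k, h⟩ : Fin n) := by
        simp [Equiv.subtypeCongr, h]
      rw [hk]
      exact ⟨fun _ => (ef.1 ⟨k, h⟩).2, fun _ => h⟩
    · have hk : Equiv.subtypeCongr ef.1 ef.2 k = (ef.2 ⟨k, h⟩ : Fin n) := by
        simp [Equiv.subtypeCongr, h]
      rw [hk]
      exact ⟨fun hh => absurd hh h, fun hh => absurd hh (ef.2 ⟨k, h⟩).2⟩⟩
  left_inv σh := by
    apply Subtype.ext
    apply Equiv.ext
    intro k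
    by_cases h : j ≤ (k : ℕ) <;>
      simp [Equiv.subtypeCongr, Equiv.subtypeEquiv, h]
  right_inv ef := by
    refine Prod.ext ?_ ?_ <;> apply Equiv.ext <;> rintro ⟨k, hk⟩ <;> apply Subtype.ext <;>
      simp [Equiv.subtypeCongr, Equiv.subtypeEquiv, hk]

lemma auxFiber (n l : ℕ) (hl : l ≤ n) (x : Fin n → Bool)
    (hx : (Finset.univ.filter fun i => x i = true).card = l) :
    (Finset.univ.filter fun σ : Equiv.Perm (Fin n) => stateAfter σ (n - l) = x).card
      = (n - l).factorial * l.factorial := by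
  have hcond : ∀ σ : Equiv.Perm (Fin n),
      stateAfter σ (n - l) = x ↔ ∀ k : Fin n, n - l ≤ (k : ℕ) ↔ x (σ k) = true := by
    intro σ
    constructor
    · intro h k
      rw [← h]
      simp [stateAfter]
    · intro h
      funext i
      have h2 := h (σ.symm i)
      simp only [Equiv.apply_symm_apply] at h2
      cases hxi : x i <;> simp [stateAfter, hxi] at h2 ⊢ <;> omega
  have hset : (Finset.univ.filter fun σ : Equiv.Perm (Fin n) => stateAfter σ (n - l) = x)
      = (Finset.univ.filter fun σ : Equiv.Perm (Fin n) =>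
          ∀ k : Fin n, n - l ≤ (k : ℕ) ↔ x (σ k) = true) := by
    ext σ; simp only [Finset.mem_filter, Finset.mem_univ, true_and]; exact hcond σ
  rw [hset, ← Fintype.card_subtype, Fintype.card_congr (auxE n (n - l) x)]
  have c1 : Fintype.card {k : Fin n // n - l ≤ (k : ℕ)} = l := by
    rw [auxCard1 n (n - l) (by omega)]; omega
  have c2 : Fintype.card {i : Fin n // x i = true} = l := by rw [auxCard3]; exact hx
  have c3 : Fintype.card {k : Fin n // ¬ n - l ≤ (k : ℕ)} = n - l :=
    auxCard2 n (n - l) (by omega)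
  have c4 : Fintype.card {i : Fin n // ¬ x i = true} = n - l := by rw [auxCard4, hx]
  rw [Fintype.card_prod, Fintype.card_equiv (Fintype.equivOfCardEq (c1.trans c2.symm)),
      Fintype.card_equiv (Fintype.equivOfCardEq (c3.trans c4.symm)), c1, c3, Nat.mul_comm]

lemma auxCount (n l : ℕ) (φ : (Fin n → Bool) → Bool) (hln : l ≤ n) :
    (Finset.univ.filter fun σ : Equiv.Perm (Fin n) =>
        φ (stateAfter σ (n - l)) = true).card
      = (Finset.univ.filter fun x : Fin n → Bool =>
          (Finset.univ.filter fun i => x i = true).card = l ∧ φ x = true).card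
        * ((n - l).factorial * l.factorial) := by
  rw [Finset.card_eq_sum_card_fiberwise
    (f := fun σ : Equiv.Perm (Fin n) => stateAfter σ (n - l))
    (t := Finset.univ.filter fun x : Fin n → Bool =>
      (Finset.univ.filter fun i => x i = true).card = l ∧ φ x = true)
    (fun σ hσ => by
      simp only [Finset.mem_coe, Finset.mem_filter, Finset.mem_univ, true_and] at hσ ⊢
      refine ⟨?_, hσ⟩
      rw [auxB n (n - l) σ (by omega)]; omega)]
  rw [Finset.sum_congr rfl (fun x hx => ?_), Finset.sum_const, smul_eq_mul]
  simp only [Finset.mem_filter, Finset.mem_univ, true_and] at hx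
  rw [Finset.filter_filter]
  have : ∀ σ : Equiv.Perm (Fin n),
      (φ (stateAfter σ (n - l)) = true ∧ stateAfter σ (n - l) = x)
        ↔ stateAfter σ (n - l) = x := by
    intro σ
    constructor
    · exact fun h => h.2
    · intro h; exact ⟨by rw [h, hx.2], h⟩
  calc (Finset.univ.filter fun σ : Equiv.Perm (Fin n) =>
          φ (stateAfter σ (n - l)) = true ∧ stateAfter σ (n - l) = x).card
      = (Finset.univ.filter fun σ : Equiv.Perm (Fin n) =>
          stateAfter σ (n - l) = x).card := by
        congr 1; ext σ
        simp only [Finset.mem_filter, Finset.mem_univ, true_and]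
        exact this σ
    _ = (n - l).factorial * l.factorial := auxFiber n l hln x hx.1

lemma auxFlip (n l : ℕ) (φ : (Fin n → Bool) → Bool)
    (hmono : ∀ x y : Fin n → Bool, (∀ i, x i = true → y i = true) →
      φ x = true → φ y = true)
    (hbot : φ (fun _ => false) = false)
    (hl1 : 1 ≤ l) (hln : l ≤ n) (σ : Equiv.Perm (Fin n)) :
    ((Finset.Icc (n - l + 1) n).filter fun j =>
        φ (stateAfter σ (j - 1)) = true ∧ φ (stateAfter σ j) = false).card
      = if φ (stateAfter σ (n - l)) = true then 1 else 0 := by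
  have hanti : ∀ a b : ℕ, a ≤ b → φ (stateAfter σ b) = true →
      φ (stateAfter σ a) = true := by
    intro a b hab h
    refine hmono _ _ (fun i hi => ?_) h
    simp only [stateAfter, decide_eq_true_eq] at hi ⊢
    omega
  have hFn : φ (stateAfter σ n) = false := by
    have : stateAfter σ n = fun _ => false := by
      funext i
      simp only [stateAfter, decide_eq_false_iff_not]
      exact fun h => absurd (σ.symm i).isLt (by omega)
    rw [this]; exact hbot
  by_cases hF : φ (stateAfter σ (n - l)) = true
  · rw [if_pos hF]
    have hex : ∃ j, (n - l + 1 ≤ j) ∧ φ (stateAfter σ j) = false := ⟨n, by omega, hFn⟩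
    set j₀ := Nat.find hex with hj₀
    have hspec := Nat.find_spec hex
    have hj₀n : j₀ ≤ n := Nat.find_min' hex ⟨by omega, hFn⟩
    have hprev : φ (stateAfter σ (j₀ - 1)) = true := by
      by_contra hc
      have hfalse : φ (stateAfter σ (j₀ - 1)) = false := by
        revert hc; cases φ (stateAfter σ (j₀ - 1)) <;> simp
      rcases eq_or_lt_of_le (show n - l ≤ j₀ - 1 by omega) with h | h
      · rw [← h] at hfalse; rw [hF] at hfalse; exact Bool.noConfusion hfalse
      · exact Nat.find_min hex (show j₀ - 1 < j₀ by omega) ⟨by omega, hfalse⟩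
    have hfs : ((Finset.Icc (n - l + 1) n).filter fun j =>
        φ (stateAfter σ (j - 1)) = true ∧ φ (stateAfter σ j) = false) = {j₀} := by
      ext j
      simp only [Finset.mem_filter, Finset.mem_Icc, Finset.mem_singleton]
      constructor
      · rintro ⟨⟨h1, h2⟩, ht, hf⟩
        have hle : j₀ ≤ j := Nat.find_min' hex ⟨h1, hf⟩
        by_contra hne
        have hlt : j₀ < j := lt_of_le_of_ne hle (Ne.symm hne)
        have := hanti j₀ (j - 1) (by omega) ht
        rw [hspec.2] at this; exact Bool.noConfusion this
      · rintro rfl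
        exact ⟨⟨hspec.1, hj₀n⟩, hprev, hspec.2⟩
    rw [hfs, Finset.card_singleton]
  · rw [if_neg hF, Finset.card_eq_zero, Finset.filter_eq_empty_iff]
    intro j hj
    simp only [Finset.mem_Icc] at hj
    rintro ⟨ht, -⟩
    exact hF (hanti (n - l) (j - 1) (by omega) ht)


/-- for a coherent system with one type of component,
`Φ(l) = Σ_{j = n−l+1}^{n} s_j`; equivalently, `Φ(l)` equals the proportion of
permutations (failure orders) such that the system functions with exactly the
last `l` components in that order still functioning. -/
theorem survSig_eq_sum_samaniego
    (n : ℕ) (φ : (Fin n → Bool) → Bool)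
    (hmono : ∀ x y : Fin n → Bool, (∀ i, x i = true → y i = true) →
      φ x = true → φ y = true)
    (hbot : φ (fun _ => false) = false) (htop : φ (fun _ => true) = true)
    (l : ℕ) (hl1 : 1 ≤ l) (hln : l ≤ n) :
    survSig n φ l = ∑ j ∈ Finset.Icc (n - l + 1) n, samaniego n φ j ∧
    survSig n φ l =
      ((Finset.univ.filter fun σ : Equiv.Perm (Fin n) =>
          φ (stateAfter σ (n - l)) = true).card : ℝ) / (n.factorial : ℝ) := by
  have hC := auxCount n l φ hln
  have hch : (0:ℝ) < (n.choose l : ℝ) := by exact_mod_cast Nat.choose_pos hln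
  have hfact : (0:ℝ) < (n.factorial : ℝ) := by exact_mod_cast Nat.factorial_pos n
  have hkey : ((n.choose l : ℕ) : ℝ) * (l.factorial : ℕ) * ((n - l).factorial : ℕ)
      = (n.factorial : ℝ) := by
    exact_mod_cast Nat.choose_mul_factorial_mul_factorial hln
  have goal2 : survSig n φ l = ((Finset.univ.filter fun σ : Equiv.Perm (Fin n) =>
      φ (stateAfter σ (n - l)) = true).card : ℝ) / (n.factorial : ℝ) := by
    unfold survSig
    rw [hC]
    push_cast
    rw [div_eq_div_iff hch.ne' hfact.ne']
    linear_combination (-((Finset.univ.filter fun x : Fin n → Bool =>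
      (Finset.univ.filter fun i => x i = true).card = l ∧ φ x = true).card : ℝ)) * hkey
  have hsum : ∑ j ∈ Finset.Icc (n - l + 1) n,
      (Finset.univ.filter fun σ : Equiv.Perm (Fin n) =>
        φ (stateAfter σ (j - 1)) = true ∧ φ (stateAfter σ j) = false).card
      = (Finset.univ.filter fun σ : Equiv.Perm (Fin n) =>
          φ (stateAfter σ (n - l)) = true).card := by
    calc ∑ j ∈ Finset.Icc (n - l + 1) n,
        (Finset.univ.filter fun σ : Equiv.Perm (Fin n) =>
          φ (stateAfter σ (j - 1)) = true ∧ φ (stateAfter σ j) = false).card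
        = ∑ j ∈ Finset.Icc (n - l + 1) n, ∑ σ : Equiv.Perm (Fin n),
            if φ (stateAfter σ (j - 1)) = true ∧ φ (stateAfter σ j) = false
              then 1 else 0 := by
          exact Finset.sum_congr rfl fun j _ => Finset.card_filter _ _
      _ = ∑ σ : Equiv.Perm (Fin n), ∑ j ∈ Finset.Icc (n - l + 1) n,
            if φ (stateAfter σ (j - 1)) = true ∧ φ (stateAfter σ j) = false
              then 1 else 0 := Finset.sum_comm
      _ = ∑ σ : Equiv.Perm (Fin n),
            if φ (stateAfter σ (n - l)) = true then 1 else 0 := by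
          refine Finset.sum_congr rfl fun σ _ => ?_
          rw [← Finset.card_filter]
          exact auxFlip n l φ hmono hbot hl1 hln σ
      _ = (Finset.univ.filter fun σ : Equiv.Perm (Fin n) =>
            φ (stateAfter σ (n - l)) = true).card := (Finset.card_filter _ _).symm
  refine ⟨?_, goal2⟩
  rw [goal2]
  simp only [samaniego]
  rw [← Finset.sum_div, ← Nat.cast_sum, hsum]
end
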